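/- arXiv:1104.4561 — 4 statements merged into one kernel-verified Lean document; each statement's English description precedes it below -/
import Mathlib

section
/- Let $(A_n)$ be a sequence of linear automorphisms of a finite dimensional complex normed vector space $E$ such that for every $\theta>1$ there exist $C(\theta)>0$ and $0<\alpha(\theta)<1$ with $\|A_{n+\ell,n}^{-1}\| \le C(\theta)\,\theta^n\,\alpha(\theta)^\ell$ for all $n,\ell\in\mathbb{N}$. Then for every subexponential sequence $(b_n)\subset E$, the equation $u_{n+1} = A_n u_n + b_n$ has a unique subexponential solution $(u_n)\subset E$. -/
/-- A sequence in a normed space is subexponential if for every `θ > 1` it is `O(θ^n)`. -/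
def Subexp {E : Type*} [Norm E] (u : ℕ → E) : Prop :=
  ∀ θ : ℝ, 1 < θ → ∃ B : ℝ, 0 < B ∧ ∀ n : ℕ, ‖u n‖ ≤ B * θ ^ n

/-- `transE A m ℓ` is the composition `A_{m+ℓ-1} ∘ ⋯ ∘ A_m`, i.e. `A_{m+ℓ, m}`. -/
def transE {E : Type*} [NormedAddCommGroup E] [NormedSpace ℂ E]
    (A : ℕ → E ≃L[ℂ] E) (m : ℕ) : ℕ → (E ≃L[ℂ] E)
  | 0 => ContinuousLinearEquiv.refl ℂ E
  | (ℓ + 1) => (transE A m ℓ).trans (A (m + ℓ))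

lemma transE_succ_apply {E : Type*} [NormedAddCommGroup E] [NormedSpace ℂ E]
    (A : ℕ → E ≃L[ℂ] E) (n ℓ : ℕ) (x : E) :
    transE A n (ℓ + 1) x = A (n + ℓ) (transE A n ℓ x) := rfl

lemma transE_succ_left {E : Type*} [NormedAddCommGroup E] [NormedSpace ℂ E]
    (A : ℕ → E ≃L[ℂ] E) (n ℓ : ℕ) (x : E) :
    transE A n (ℓ + 1) x = transE A (n + 1) ℓ (A n x) := by
  induction ℓ generalizing x with
  | zero => simp [transE]
  | succ k ih =>
    rw [transE_succ_apply, ih, transE_succ_apply, show n + (k + 1) = n + 1 + k by ring]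

lemma transE_symm_succ {E : Type*} [NormedAddCommGroup E] [NormedSpace ℂ E]
    (A : ℕ → E ≃L[ℂ] E) (n ℓ : ℕ) (y : E) :
    A n ((transE A n (ℓ + 1)).symm y) = (transE A (n + 1) ℓ).symm y := by
  apply (transE A (n + 1) ℓ).injective
  rw [ContinuousLinearEquiv.apply_symm_apply, ← transE_succ_left,
    ContinuousLinearEquiv.apply_symm_apply]

theorem stmt1 {E : Type*} [NormedAddCommGroup E] [NormedSpace ℂ E] [FiniteDimensional ℂ E]
    (A : ℕ → E ≃L[ℂ] E)
    (hA : ∀ θ : ℝ, 1 < θ → ∃ C : ℝ, 0 < C ∧ ∃ α : ℝ, 0 < α ∧ α < 1 ∧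
      ∀ n ℓ : ℕ, ‖((transE A n ℓ).symm : E →L[ℂ] E)‖ ≤ C * θ ^ n * α ^ ℓ)
    (b : ℕ → E) (hb : Subexp b) :
    ∃! u : ℕ → E, Subexp u ∧ ∀ n : ℕ, u (n + 1) = A n (u n) + b n := by
  -- combined geometric bound
  have key : ∀ θ : ℝ, 1 < θ → ∃ K : ℝ, 0 < K ∧ ∃ r : ℝ, 0 < r ∧ r < 1 ∧
      ∀ n ℓ : ℕ, ‖(transE A n (ℓ + 1)).symm (b (n + ℓ))‖ ≤ K * θ ^ n * r ^ ℓ := by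
    intro θ hθ
    set θ₁ := Real.sqrt θ with hθ₁def
    have hθ0 : (0:ℝ) < θ := by linarith
    have hθ₁ : 1 < θ₁ := by
      rw [show (1:ℝ) = Real.sqrt 1 by simp]
      exact Real.sqrt_lt_sqrt (by norm_num) hθ
    obtain ⟨C, hC, α, hα0, hα1, hbound⟩ := hA θ₁ hθ₁
    set θ₂ := min θ₁ ((1 + α⁻¹) / 2) with hθ₂def
    have hαinv : 1 < α⁻¹ := (one_lt_inv₀ hα0).2 hα1
    have hθ₂1 : 1 < θ₂ := lt_min hθ₁ (by linarith)
    have hθ₂0 : 0 < θ₂ := by linarith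
    have hαθ₂ : α * θ₂ < 1 := by
      have h1 : θ₂ ≤ (1 + α⁻¹) / 2 := min_le_right _ _
      have : α * θ₂ ≤ α * ((1 + α⁻¹) / 2) := by nlinarith
      have h2 : α * ((1 + α⁻¹) / 2) = (α + 1) / 2 := by field_simp
      nlinarith
    obtain ⟨B, hB, hbB⟩ := hb θ₂ hθ₂1
    refine ⟨C * B * α, by positivity, α * θ₂, by positivity, hαθ₂, fun n ℓ => ?_⟩
    have h1 : ‖(transE A n (ℓ + 1)).symm (b (n + ℓ))‖ ≤
        (C * θ₁ ^ n * α ^ (ℓ + 1)) * (B * θ₂ ^ (n + ℓ)) := by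
      calc ‖(transE A n (ℓ + 1)).symm (b (n + ℓ))‖
          = ‖((transE A n (ℓ + 1)).symm : E →L[ℂ] E) (b (n + ℓ))‖ := rfl
        _ ≤ ‖((transE A n (ℓ + 1)).symm : E →L[ℂ] E)‖ * ‖b (n + ℓ)‖ :=
            ContinuousLinearMap.le_opNorm _ _
        _ ≤ (C * θ₁ ^ n * α ^ (ℓ + 1)) * (B * θ₂ ^ (n + ℓ)) := by
            apply mul_le_mul (hbound n (ℓ + 1)) (hbB (n + ℓ)) (norm_nonneg _) (by positivity)
    have h2 : (C * θ₁ ^ n * α ^ (ℓ + 1)) * (B * θ₂ ^ (n + ℓ)) =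
        (C * B * α) * (θ₁ * θ₂) ^ n * (α * θ₂) ^ ℓ := by
      rw [pow_add, pow_succ, mul_pow, mul_pow]; ring
    have h3 : θ₁ * θ₂ ≤ θ := by
      have : θ₂ ≤ θ₁ := min_le_left _ _
      have hs : θ₁ * θ₁ = θ := Real.mul_self_sqrt hθ0.le
      nlinarith
    calc ‖(transE A n (ℓ + 1)).symm (b (n + ℓ))‖
        ≤ (C * B * α) * (θ₁ * θ₂) ^ n * (α * θ₂) ^ ℓ := by rw [← h2]; exact h1
      _ ≤ (C * B * α) * θ ^ n * (α * θ₂) ^ ℓ := by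
          have hnn : 0 ≤ θ₁ * θ₂ := by positivity
          gcongr
  -- summability
  obtain ⟨K₀, hK₀, r₀, hr₀0, hr₀1, hkey₀⟩ := key 2 one_lt_two
  have hsumnorm : ∀ n : ℕ, Summable (fun ℓ : ℕ => ‖(transE A n (ℓ + 1)).symm (b (n + ℓ))‖) := by
    intro n
    apply Summable.of_nonneg_of_le (fun ℓ => norm_nonneg _) (fun ℓ => hkey₀ n ℓ)
    exact (summable_geometric_of_lt_one hr₀0.le hr₀1).mul_left _
  have hsum : ∀ n : ℕ, Summable (fun ℓ : ℕ => (transE A n (ℓ + 1)).symm (b (n + ℓ))) :=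
    fun n => Summable.of_norm (hsumnorm n)
  set u : ℕ → E := fun n => -∑' ℓ : ℕ, (transE A n (ℓ + 1)).symm (b (n + ℓ)) with hu
  have hrec : ∀ n : ℕ, u (n + 1) = A n (u n) + b n := by
    intro n
    have hmap : A n (∑' ℓ : ℕ, (transE A n (ℓ + 1)).symm (b (n + ℓ))) =
        ∑' ℓ : ℕ, (transE A (n + 1) ℓ).symm (b (n + ℓ)) := by
      rw [show (A n (∑' ℓ : ℕ, (transE A n (ℓ + 1)).symm (b (n + ℓ)))) =
        ((A n : E →L[ℂ] E) (∑' ℓ : ℕ, (transE A n (ℓ + 1)).symm (b (n + ℓ)))) from rfl,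
        ContinuousLinearMap.map_tsum _ (hsum n)]
      exact tsum_congr fun ℓ => transE_symm_succ A n ℓ _
    have hsum' : Summable (fun ℓ : ℕ => (transE A (n + 1) ℓ).symm (b (n + ℓ))) := by
      have := (hsum n).map (A n : E →L[ℂ] E) (A n).continuous
      apply this.congr
      intro ℓ
      exact transE_symm_succ A n ℓ _
    have hzero : (∑' ℓ : ℕ, (transE A (n + 1) ℓ).symm (b (n + ℓ))) =
        b n + ∑' ℓ : ℕ, (transE A (n + 1) (ℓ + 1)).symm (b (n + (ℓ + 1))) := by
      rw [Summable.tsum_eq_zero_add hsum']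
      simp [transE]
    have hshift : (∑' ℓ : ℕ, (transE A (n + 1) (ℓ + 1)).symm (b (n + (ℓ + 1)))) =
        ∑' ℓ : ℕ, (transE A (n + 1) (ℓ + 1)).symm (b ((n + 1) + ℓ)) := by
      apply tsum_congr
      intro ℓ
      rw [show n + (ℓ + 1) = (n + 1) + ℓ by ring]
    rw [hu]
    simp only [map_neg, hmap, hzero, hshift]
    abel
  have husub : Subexp u := by
    intro θ hθ
    obtain ⟨K, hK, r, hr0, hr1, hkey⟩ := key θ hθ
    refine ⟨K * (1 - r)⁻¹, mul_pos hK (inv_pos.2 (by linarith)), fun n => ?_⟩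
    have h1 : ‖u n‖ ≤ ∑' ℓ : ℕ, ‖(transE A n (ℓ + 1)).symm (b (n + ℓ))‖ := by
      rw [hu]; simp only [norm_neg]
      exact norm_tsum_le_tsum_norm (hsumnorm n)
    have h2 : (∑' ℓ : ℕ, ‖(transE A n (ℓ + 1)).symm (b (n + ℓ))‖) ≤
        ∑' ℓ : ℕ, K * θ ^ n * r ^ ℓ := by
      apply Summable.tsum_le_tsum (fun ℓ => hkey n ℓ) (hsumnorm n)
      exact (summable_geometric_of_lt_one hr0.le hr1).mul_left _
    have h3 : (∑' ℓ : ℕ, K * θ ^ n * r ^ ℓ) = K * (1 - r)⁻¹ * θ ^ n := by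
      rw [tsum_mul_left, tsum_geometric_of_lt_one hr0.le hr1]; ring
    calc ‖u n‖ ≤ _ := h1
      _ ≤ _ := h2
      _ = K * (1 - r)⁻¹ * θ ^ n := h3
  refine ⟨u, ⟨husub, hrec⟩, ?_⟩
  rintro v ⟨hvsub, hvrec⟩
  funext n
  set w : ℕ → E := fun m => v m - u m with hw
  have hwrec : ∀ m ℓ : ℕ, w (m + ℓ) = transE A m ℓ (w m) := by
    intro m ℓ
    induction ℓ with
    | zero => simp [transE]
    | succ k ih =>
      rw [show m + (k + 1) = (m + k) + 1 by ring, transE_succ_apply, ← ih, hw]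
      simp only [hvrec, hrec]
      rw [map_sub]
      abel
  -- w n is zero
  have hA2 := hA 2 one_lt_two
  obtain ⟨C, hC, α, hα0, hα1, hbound⟩ := hA2
  set θ₂ := min 2 ((1 + α⁻¹) / 2) with hθ₂def
  have hαinv : 1 < α⁻¹ := (one_lt_inv₀ hα0).2 hα1
  have hθ₂1 : 1 < θ₂ := lt_min one_lt_two (by linarith)
  have hθ₂0 : 0 < θ₂ := by linarith
  have hαθ₂ : α * θ₂ < 1 := by
    have h1 : θ₂ ≤ (1 + α⁻¹) / 2 := min_le_right _ _
    have : α * θ₂ ≤ α * ((1 + α⁻¹) / 2) := by nlinarith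
    have h2 : α * ((1 + α⁻¹) / 2) = (α + 1) / 2 := by field_simp
    nlinarith
  obtain ⟨Bv, hBv, hbBv⟩ := hvsub θ₂ hθ₂1
  obtain ⟨Bu, hBu, hbBu⟩ := husub θ₂ hθ₂1
  have hwn : w n = 0 := by
    have hb1 : ∀ ℓ : ℕ, ‖w n‖ ≤ (C * 2 ^ n * (Bv + Bu) * θ₂ ^ n) * (α * θ₂) ^ ℓ := by
      intro ℓ
      have h1 : w n = (transE A n ℓ).symm (w (n + ℓ)) := by
        rw [hwrec n ℓ, ContinuousLinearEquiv.symm_apply_apply]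
      have h2 : ‖w (n + ℓ)‖ ≤ (Bv + Bu) * θ₂ ^ (n + ℓ) := by
        calc ‖w (n + ℓ)‖ ≤ ‖v (n + ℓ)‖ + ‖u (n + ℓ)‖ := norm_sub_le _ _
          _ ≤ Bv * θ₂ ^ (n + ℓ) + Bu * θ₂ ^ (n + ℓ) := add_le_add (hbBv _) (hbBu _)
          _ = (Bv + Bu) * θ₂ ^ (n + ℓ) := by ring
      calc ‖w n‖ = ‖(transE A n ℓ).symm (w (n + ℓ))‖ := by rw [← h1]
        _ = ‖((transE A n ℓ).symm : E →L[ℂ] E) (w (n + ℓ))‖ := rfl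
        _ ≤ ‖((transE A n ℓ).symm : E →L[ℂ] E)‖ * ‖w (n + ℓ)‖ :=
            ContinuousLinearMap.le_opNorm _ _
        _ ≤ (C * 2 ^ n * α ^ ℓ) * ((Bv + Bu) * θ₂ ^ (n + ℓ)) := by
            apply mul_le_mul (hbound n ℓ) h2 (norm_nonneg _) (by positivity)
        _ = (C * 2 ^ n * (Bv + Bu) * θ₂ ^ n) * (α * θ₂) ^ ℓ := by
            rw [pow_add, mul_pow]; ring
    have htend : Filter.Tendsto (fun ℓ : ℕ => (C * 2 ^ n * (Bv + Bu) * θ₂ ^ n) * (α * θ₂) ^ ℓ)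
        Filter.atTop (nhds 0) := by
      rw [show (0:ℝ) = (C * 2 ^ n * (Bv + Bu) * θ₂ ^ n) * 0 by ring]
      exact (tendsto_pow_atTop_nhds_zero_of_lt_one (by positivity) hαθ₂).const_mul _
    have hle : ‖w n‖ ≤ 0 :=
      le_of_tendsto_of_tendsto' tendsto_const_nhds htend hb1
    simpa using le_antisymm hle (norm_nonneg _)
  have : v n - u n = 0 := hwn
  exact sub_eq_zero.mp this
end

section
/- Let $V$ be a linear subspace of a finite dimensional complex vector space $E$ and $\pi\colon E\to E/V$ the quotient projection. Let $(A_n)$ be a subexponential sequence of linear automorphisms of $E$ with $A_n V = V$ for every $n$, and assume that for every $\theta>1$ there exist $C(\theta)>0$ and $0<\alpha(\theta)<1$ such that the induced operators on $E/V$ satisfy $\|A_{n+\ell,n}^{-1}\|_{L(E/V)} \le C(\theta)\theta^n\alpha(\theta)^\ell$ for all $n,\ell$. Then for every subexponential sequence $(b_n)\subset E$ there exist a subexponential sequence $(u_n)\subset E$, unique modulo $V$, and a subexponential sequence $(v_n)\subset V$ such that $u_{n+1} = A_n u_n + b_n + v_n$ for all $n$. -/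
section Aux
variable {E : Type*} [NormedAddCommGroup E] [NormedSpace ℂ E]

lemma transE_apply_succ_left (A : ℕ → E ≃L[ℂ] E) (n k : ℕ) (x : E) :
    transE A n (k+1) x = transE A (n+1) k (A n x) := by
  induction k with
  | zero => rfl
  | succ k ih =>
      have h1 : transE A n (k+2) x = A (n+(k+1)) (transE A n (k+1) x) := rfl
      have h2 : transE A (n+1) (k+1) (A n x) = A ((n+1)+k) (transE A (n+1) k (A n x)) := rfl
      rw [h1, h2, ih, show n+(k+1) = (n+1)+k by omega]

lemma transE_peel (A : ℕ → E ≃L[ℂ] E) (n k : ℕ) (x : E) :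
    A n ((transE A n (k+1)).symm x) = (transE A (n+1) k).symm x := by
  apply (transE A (n+1) k).injective
  rw [ContinuousLinearEquiv.apply_symm_apply, ← transE_apply_succ_left,
    ContinuousLinearEquiv.apply_symm_apply]

lemma sqrt_one_lt {θ : ℝ} (hθ : 1 < θ) : 1 < Real.sqrt θ := by
  rw [show (1:ℝ) = Real.sqrt 1 by simp]
  exact Real.sqrt_lt_sqrt (by norm_num) hθ

lemma sqrt_mul_self' {θ : ℝ} (hθ : 1 < θ) : Real.sqrt θ * Real.sqrt θ = θ :=
  Real.mul_self_sqrt (by linarith)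

end Aux

theorem stmt3 {E : Type*} [NormedAddCommGroup E] [NormedSpace ℂ E] [FiniteDimensional ℂ E]
    (V : Submodule ℂ E) (A : ℕ → E ≃L[ℂ] E)
    (hAsub : Subexp (fun n => (A n : E →L[ℂ] E)))
    (hAV : ∀ n : ℕ, Submodule.map (A n : E →ₗ[ℂ] E) V = V)
    (hA : ∀ θ : ℝ, 1 < θ → ∃ C : ℝ, 0 < C ∧ ∃ α : ℝ, 0 < α ∧ α < 1 ∧
      ∀ n ℓ : ℕ, ∀ x : E,
        ‖(Submodule.Quotient.mk ((transE A n ℓ).symm x) : E ⧸ V)‖ ≤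
          C * θ ^ n * α ^ ℓ * ‖(Submodule.Quotient.mk x : E ⧸ V)‖)
    (b : ℕ → E) (hb : Subexp b) :
    ∃ u v : ℕ → E, Subexp u ∧ Subexp v ∧ (∀ n, v n ∈ V) ∧
      (∀ n : ℕ, u (n + 1) = A n (u n) + b n + v n) ∧
      ∀ u' v' : ℕ → E, Subexp u' → Subexp v' → (∀ n, v' n ∈ V) →
        (∀ n : ℕ, u' (n + 1) = A n (u' n) + b n + v' n) → ∀ n, u' n - u n ∈ V := by
  classical
  haveI : IsClosed (V : Set E) := Submodule.closed_of_finiteDimensional V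
  -- basic facts
  have hAVmem : ∀ (n : ℕ) (z : E), z ∈ V → A n z ∈ V := by
    intro n z hz
    have : (A n : E →ₗ[ℂ] E) z ∈ Submodule.map (A n : E →ₗ[ℂ] E) V :=
      Submodule.mem_map_of_mem hz
    rw [hAV n] at this
    simpa using this
  have πAeq : ∀ (m : ℕ) (x y : E),
      (Submodule.Quotient.mk x : E ⧸ V) = Submodule.Quotient.mk y →
      (Submodule.Quotient.mk (A m x) : E ⧸ V) = Submodule.Quotient.mk (A m y) := by
    intro m x y h
    rw [Submodule.Quotient.eq] at h ⊢
    have : A m (x - y) ∈ V := hAVmem m _ h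
    simpa [map_sub] using this
  -- section of the quotient map
  obtain ⟨g, hg⟩ := V.mkQ.exists_rightInverse_of_surjective (Submodule.range_mkQ V)
  have hsec : ∀ x : E ⧸ V, (Submodule.Quotient.mk (g x) : E ⧸ V) = x := by
    intro x
    have := LinearMap.ext_iff.mp hg x
    simpa using this
  set gL : (E ⧸ V) →L[ℂ] E := LinearMap.toContinuousLinearMap g with hgL
  have hgLapp : ∀ x, gL x = g x := fun x => rfl
  -- the series terms
  set q : ℕ → ℕ → E ⧸ V :=
    fun n k => Submodule.Quotient.mk ((transE A n (k+1)).symm (b (n+k))) with hq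
  -- uniform geometric bounds
  have hbound : ∀ θ : ℝ, 1 < θ → ∃ K r : ℝ, 0 < K ∧ 0 ≤ r ∧ r < 1 ∧
      ∀ n k : ℕ, ‖q n k‖ ≤ K * θ ^ n * r ^ k := by
    intro θ₀ hθ₀
    set θ := Real.sqrt θ₀ with hθdef
    have hθ : 1 < θ := sqrt_one_lt hθ₀
    obtain ⟨C, hC, α, hα0, hα1, hest⟩ := hA θ hθ
    have hαinv : 1 < α⁻¹ := (one_lt_inv₀ hα0).mpr hα1
    set τ := min θ ((1 + α⁻¹)/2) with hτdef
    have hτ1 : 1 < τ := lt_min hθ (by linarith)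
    have hτθ : τ ≤ θ := min_le_left _ _
    have hατ0 : 0 ≤ α * τ := by positivity
    have hατ : α * τ < 1 := by
      have h1 : α * τ ≤ α * ((1 + α⁻¹)/2) :=
        mul_le_mul_of_nonneg_left (min_le_right _ _) hα0.le
      have h2 : α * ((1 + α⁻¹)/2) = (α + 1)/2 := by
        field_simp
      rw [h2] at h1
      linarith
    obtain ⟨B, hB, hBb⟩ := hb τ hτ1
    refine ⟨C * α * B, α * τ, by positivity, hατ0, hατ, ?_⟩
    intro n k
    have step1 : ‖q n k‖ ≤ C * θ ^ n * α ^ (k+1) * ‖(Submodule.Quotient.mk (b (n+k)) : E ⧸ V)‖ :=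
      hest n (k+1) (b (n+k))
    have step2 : ‖(Submodule.Quotient.mk (b (n+k)) : E ⧸ V)‖ ≤ B * τ ^ (n+k) :=
      le_trans (Submodule.Quotient.norm_mk_le _ _) (hBb (n+k))
    have step3 : ‖q n k‖ ≤ C * θ ^ n * α ^ (k+1) * (B * τ ^ (n+k)) :=
      le_trans step1 (mul_le_mul_of_nonneg_left step2 (by positivity))
    have hrw : C * θ ^ n * α ^ (k+1) * (B * τ ^ (n+k)) =
        (C * α * B) * ((θ * τ) ^ n * (α * τ) ^ k) := by
      rw [pow_succ, pow_add, mul_pow, mul_pow]; ring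
    have hθτ : (θ * τ) ^ n ≤ θ₀ ^ n := by
      apply pow_le_pow_left₀ (by positivity)
      calc θ * τ ≤ θ * θ := mul_le_mul_of_nonneg_left hτθ (by linarith)
        _ = θ₀ := sqrt_mul_self' hθ₀
    calc ‖q n k‖ ≤ (C * α * B) * ((θ * τ) ^ n * (α * τ) ^ k) := by rw [← hrw]; exact step3
      _ ≤ (C * α * B) * (θ₀ ^ n * (α * τ) ^ k) := by
          apply mul_le_mul_of_nonneg_left _ (by positivity)
          exact mul_le_mul_of_nonneg_right hθτ (by positivity)
      _ = C * α * B * θ₀ ^ n * (α * τ) ^ k := by ring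
  -- summability
  have hsum : ∀ n, Summable (q n) := by
    obtain ⟨K, r, hK, hr0, hr1, hqb⟩ := hbound 2 one_lt_two
    intro n
    apply Summable.of_norm_bounded
      ((summable_geometric_of_lt_one hr0 hr1).mul_left (K * 2 ^ n))
    intro k
    calc ‖q n k‖ ≤ K * 2 ^ n * r ^ k := hqb n k
      _ = (K * 2 ^ n) * r ^ k := by ring
  set ubar : ℕ → E ⧸ V := fun n => -∑' k, q n k with hubar
  have hubar_sub : Subexp ubar := by
    intro θ hθ
    obtain ⟨K, r, hK, hr0, hr1, hqb⟩ := hbound θ hθ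
    refine ⟨K * (1 - r)⁻¹, mul_pos hK (inv_pos.mpr (by linarith)), ?_⟩
    intro n
    have hsn : Summable fun k => K * θ ^ n * r ^ k :=
      (summable_geometric_of_lt_one hr0 hr1).mul_left _
    have hnorm_sum : Summable fun k => ‖q n k‖ :=
      Summable.of_nonneg_of_le (fun k => norm_nonneg _) (fun k => hqb n k) hsn
    calc ‖ubar n‖ = ‖∑' k, q n k‖ := norm_neg _
      _ ≤ ∑' k, ‖q n k‖ := norm_tsum_le_tsum_norm hnorm_sum
      _ ≤ ∑' k, K * θ ^ n * r ^ k := Summable.tsum_le_tsum (fun k => hqb n k) hnorm_sum hsn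
      _ = (K * θ ^ n) * ∑' k, r ^ k := by rw [tsum_mul_left]
      _ = (K * θ ^ n) * (1 - r)⁻¹ := by rw [tsum_geometric_of_lt_one hr0 hr1]
      _ = K * (1 - r)⁻¹ * θ ^ n := by ring
  -- the solution
  set u : ℕ → E := fun n => gL (ubar n) with hu
  have hπu : ∀ n, (Submodule.Quotient.mk (u n) : E ⧸ V) = ubar n := fun n => hsec _
  have hu_sub : Subexp u := by
    intro θ hθ
    obtain ⟨B, hB, hBu⟩ := hubar_sub θ hθ
    refine ⟨(‖gL‖ + 1) * B, by positivity, fun n => ?_⟩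
    calc ‖u n‖ ≤ ‖gL‖ * ‖ubar n‖ := gL.le_opNorm _
      _ ≤ (‖gL‖ + 1) * (B * θ ^ n) := by
          apply mul_le_mul (by linarith) (hBu n) (norm_nonneg _) (by positivity)
      _ = (‖gL‖ + 1) * B * θ ^ n := by ring
  -- the recursion in the quotient
  have hrec : ∀ n, (Submodule.Quotient.mk (A n (u n)) : E ⧸ V) + Submodule.Quotient.mk (b n)
      = ubar (n+1) := by
    intro n
    set πL : E →L[ℂ] E ⧸ V := LinearMap.toContinuousLinearMap V.mkQ with hπL
    have hπLapp : ∀ x : E, πL x = Submodule.Quotient.mk x := fun x => rfl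
    set T : (E ⧸ V) →L[ℂ] E ⧸ V := πL.comp ((A n : E →L[ℂ] E).comp gL) with hT
    have hTq : ∀ k, T (q n k) =
        Submodule.Quotient.mk ((transE A (n+1) k).symm (b (n+k))) := by
      intro k
      have h1 : T (q n k) = Submodule.Quotient.mk (A n (gL (q n k))) := rfl
      rw [h1]
      have h2 : (Submodule.Quotient.mk (gL (q n k)) : E ⧸ V) =
          Submodule.Quotient.mk ((transE A n (k+1)).symm (b (n+k))) := hsec _
      rw [πAeq n _ _ h2, transE_peel]
    have hTubar : T (ubar n) = -(Submodule.Quotient.mk (b n) + ∑' k, q (n+1) k) := by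
      have h1 : T (ubar n) = -∑' k, T (q n k) := by
        rw [hubar]
        simp only [map_neg]
        rw [T.map_tsum (hsum n)]
      rw [h1]
      congr 1
      have h2 : (fun k => T (q n k)) =
          fun k => Submodule.Quotient.mk ((transE A (n+1) k).symm (b (n+k))) :=
        funext hTq
      rw [h2]
      have hsump : Summable fun k =>
          (Submodule.Quotient.mk ((transE A (n+1) k).symm (b (n+k))) : E ⧸ V) := by
        apply (summable_nat_add_iff 1).mp
        have : (fun k => (Submodule.Quotient.mk
            ((transE A (n+1) (k+1)).symm (b (n+(k+1)))) : E ⧸ V)) = q (n+1) := by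
          funext k
          rw [hq, show n+(k+1) = (n+1)+k by omega]
        rw [this]
        exact hsum (n+1)
      rw [Summable.tsum_eq_zero_add hsump]
      have hps : ∀ k : ℕ, (Submodule.Quotient.mk
          ((transE A (n+1) (k+1)).symm (b (n+(k+1)))) : E ⧸ V) = q (n+1) k := by
        intro k
        rw [hq, show n+(k+1) = (n+1)+k by omega]
      rw [tsum_congr hps]
      have hp0 : (Submodule.Quotient.mk ((transE A (n+1) 0).symm (b (n+0))) : E ⧸ V) =
          Submodule.Quotient.mk (b n) := rfl
      rw [hp0]
    have hTu : T (ubar n) = Submodule.Quotient.mk (A n (u n)) := rfl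
    rw [← hTu, hTubar]
    simp only [hubar]
    abel
  set v : ℕ → E := fun n => u (n+1) - A n (u n) - b n with hv
  have hveq : ∀ n, u (n+1) = A n (u n) + b n + v n := by
    intro n; simp only [hv]; abel
  have hvV : ∀ n, v n ∈ V := by
    intro n
    rw [← Submodule.Quotient.mk_eq_zero]
    have : (Submodule.Quotient.mk (v n) : E ⧸ V) =
        Submodule.Quotient.mk (u (n+1)) - Submodule.Quotient.mk (A n (u n))
          - Submodule.Quotient.mk (b n) := by
      simp only [hv]
      simp [Submodule.Quotient.mk_sub]
    rw [this, hπu, ← hrec n]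
    abel
  have hv_sub : Subexp v := by
    intro θ hθ
    set σ := Real.sqrt θ with hσdef
    have hσ : 1 < σ := sqrt_one_lt hθ
    obtain ⟨B1, hB1, h1⟩ := hu_sub θ hθ
    obtain ⟨B2, hB2, h2⟩ := hAsub σ hσ
    obtain ⟨B3, hB3, h3⟩ := hu_sub σ hσ
    obtain ⟨B4, hB4, h4⟩ := hb θ hθ
    refine ⟨B1 * θ + B2 * B3 + B4, by positivity, fun n => ?_⟩
    have hAn : ‖A n (u n)‖ ≤ B2 * σ ^ n * (B3 * σ ^ n) := by
      calc ‖A n (u n)‖ ≤ ‖(A n : E →L[ℂ] E)‖ * ‖u n‖ := (A n : E →L[ℂ] E).le_opNorm _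
        _ ≤ (B2 * σ ^ n) * (B3 * σ ^ n) := by
            apply mul_le_mul (h2 n) (h3 n) (norm_nonneg _) (by positivity)
    have hσσ : (σ ^ n) * (σ ^ n) = θ ^ n := by
      rw [← mul_pow, sqrt_mul_self' hθ]
    calc ‖v n‖ ≤ ‖u (n+1)‖ + ‖A n (u n)‖ + ‖b n‖ := by
          simp only [hv]
          refine le_trans (norm_sub_le _ _) ?_
          have := norm_sub_le (u (n+1)) (A n (u n))
          linarith
      _ ≤ B1 * θ ^ (n+1) + B2 * σ ^ n * (B3 * σ ^ n) + B4 * θ ^ n := by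
          have := h1 (n+1); have := h4 n; linarith
      _ = (B1 * θ + B2 * B3 + B4) * θ ^ n := by
          rw [pow_succ]
          linear_combination (B2 * B3) * hσσ
  refine ⟨u, v, hu_sub, hv_sub, hvV, hveq, ?_⟩
  -- uniqueness
  intro u' v' hu'_sub hv'_sub hv'V hrec' n₀
  set w : ℕ → E := fun n => u' n - u n with hw
  have hwrec : ∀ n, (Submodule.Quotient.mk (w (n+1)) : E ⧸ V) =
      Submodule.Quotient.mk (A n (w n)) := by
    intro n
    have h1 : w (n+1) = A n (w n) + (v' n - v n) := by
      rw [hw]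
      simp only [hrec' n, hveq n, map_sub]
      abel
    rw [h1, Submodule.Quotient.eq]
    have : v' n - v n ∈ V := Submodule.sub_mem V (hv'V n) (hvV n)
    simpa using this
  have hwt : ∀ ℓ, (Submodule.Quotient.mk (w (n₀+ℓ)) : E ⧸ V) =
      Submodule.Quotient.mk (transE A n₀ ℓ (w n₀)) := by
    intro ℓ
    induction ℓ with
    | zero => rfl
    | succ ℓ ih =>
        have h1 : (Submodule.Quotient.mk (w (n₀+ℓ+1)) : E ⧸ V) =
            Submodule.Quotient.mk (A (n₀+ℓ) (w (n₀+ℓ))) := hwrec (n₀+ℓ)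
        have h2 := πAeq (n₀+ℓ) _ _ ih
        rw [show n₀+(ℓ+1) = n₀+ℓ+1 by omega, h1, h2]
        rfl
  obtain ⟨C, hC, α, hα0, hα1, hest⟩ := hA 2 one_lt_two
  have hαinv : 1 < α⁻¹ := (one_lt_inv₀ hα0).mpr hα1
  set τ := (1 + α⁻¹)/2 with hτdef
  have hτ1 : 1 < τ := by rw [hτdef]; linarith
  have hατ0 : 0 ≤ α * τ := by positivity
  have hατ : α * τ < 1 := by
    have h2 : α * ((1 + α⁻¹)/2) = (α + 1)/2 := by field_simp
    rw [hτdef, h2]; linarith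
  obtain ⟨B1, hB1, h1⟩ := hu'_sub τ hτ1
  obtain ⟨B2, hB2, h2⟩ := hu_sub τ hτ1
  have hwb : ∀ m, ‖w m‖ ≤ (B1 + B2) * τ ^ m := by
    intro m
    calc ‖w m‖ ≤ ‖u' m‖ + ‖u m‖ := norm_sub_le _ _
      _ ≤ B1 * τ ^ m + B2 * τ ^ m := by have := h1 m; have := h2 m; linarith
      _ = (B1 + B2) * τ ^ m := by ring
  have hkey : ∀ ℓ : ℕ, ‖(Submodule.Quotient.mk (w n₀) : E ⧸ V)‖ ≤
      (C * (B1 + B2) * (2*τ) ^ n₀) * (α * τ) ^ ℓ := by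
    intro ℓ
    have h3 : ‖(Submodule.Quotient.mk (w n₀) : E ⧸ V)‖ ≤
        C * 2 ^ n₀ * α ^ ℓ * ‖(Submodule.Quotient.mk (transE A n₀ ℓ (w n₀)) : E ⧸ V)‖ := by
      have := hest n₀ ℓ (transE A n₀ ℓ (w n₀))
      rwa [ContinuousLinearEquiv.symm_apply_apply] at this
    have h4 : ‖(Submodule.Quotient.mk (transE A n₀ ℓ (w n₀)) : E ⧸ V)‖ ≤ (B1+B2) * τ ^ (n₀+ℓ) := by
      rw [← hwt ℓ]
      exact le_trans (Submodule.Quotient.norm_mk_le _ _) (hwb (n₀+ℓ))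
    calc ‖(Submodule.Quotient.mk (w n₀) : E ⧸ V)‖
        ≤ C * 2 ^ n₀ * α ^ ℓ * ((B1+B2) * τ ^ (n₀+ℓ)) :=
          le_trans h3 (mul_le_mul_of_nonneg_left h4 (by positivity))
      _ = (C * (B1 + B2) * (2*τ) ^ n₀) * (α * τ) ^ ℓ := by
          rw [pow_add, mul_pow, mul_pow]; ring
  have hzero : ‖(Submodule.Quotient.mk (w n₀) : E ⧸ V)‖ = 0 := by
    have htend : Filter.Tendsto (fun ℓ : ℕ => (C * (B1 + B2) * (2*τ) ^ n₀) * (α * τ) ^ ℓ)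
        Filter.atTop (nhds 0) := by
      have := (tendsto_pow_atTop_nhds_zero_of_lt_one hατ0 hατ).const_mul
        (C * (B1 + B2) * (2*τ) ^ n₀)
      simpa using this
    have hle := ge_of_tendsto htend (Filter.Eventually.of_forall hkey)
    exact le_antisymm hle (norm_nonneg _)
  have : w n₀ ∈ closure (V : Set E) :=
    (QuotientAddGroup.norm_mk_eq_zero_iff_mem_closure (S := V.toAddSubgroup) (m := w n₀)).mp hzero
  rwa [IsClosed.closure_eq (Submodule.closed_of_finiteDimensional V)] at this
end

section
/- Define the sequence of affine maps $f_n\colon\mathbb{C}\to\mathbb{C}$ by $f_n(u) = \tfrac12 u$ if $n=0$ or $(2k)! \le n < (2k+1)!$ for some $k\in\mathbb{N}$, and $f_n(u) = 2u - 1$ if $(2k+1)! \le n < (2k+2)!$ for some $k\in\mathbb{N}$. Then no solution $(u_n)$ of $u_{n+1} = f_n(u_n)$ is subexponential; in fact, for every solution, $|u_n| \ge 2^{n+o(n)}$ along a subsequence, so $(u_n)$ is not $O(\alpha^n)$ for any $\alpha < 2$. -/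
set_option maxHeartbeats 800000


open scoped Classical in
/-- The affine maps of the counterexample. -/
noncomputable def f4 (n : ℕ) (u : ℂ) : ℂ :=
  if n = 0 ∨ ∃ k : ℕ, (2 * k).factorial ≤ n ∧ n < (2 * k + 1).factorial then
    u / 2
  else
    2 * u - 1

lemma f4_halve {n k : ℕ} (h1 : (2*k).factorial ≤ n) (h2 : n < (2*k+1).factorial) (x : ℂ) :
    f4 n x = x / 2 := by
  unfold f4
  rw [if_pos (Or.inr ⟨k, h1, h2⟩)]

lemma f4_double {n k : ℕ} (h1 : (2*k+1).factorial ≤ n) (h2 : n < (2*k+2).factorial) (x : ℂ) :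
    f4 n x = 2 * x - 1 := by
  unfold f4
  rw [if_neg]
  rintro (rfl | ⟨j, hj1, hj2⟩)
  · exact (Nat.factorial_pos (2*k+1)).not_ge h1
  · rcases le_or_gt (2*j+1) (2*k+1) with h | h
    · exact absurd (le_trans (Nat.factorial_le h) h1) (not_le.mpr hj2)
    · exact absurd (le_trans (Nat.factorial_le (by omega : 2*k+2 ≤ 2*j)) hj1) (not_le.mpr h2)

lemma halve_block (u : ℕ → ℂ) (hu : ∀ n : ℕ, u (n + 1) = f4 n (u n)) (k : ℕ) :
    ∀ m : ℕ, (2*k).factorial + m ≤ (2*k+1).factorial →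
      u ((2*k).factorial + m) = u ((2*k).factorial) / 2 ^ m := by
  intro m
  induction m with
  | zero => simp
  | succ m ih =>
    intro h
    have hm : (2*k).factorial + m ≤ (2*k+1).factorial := by omega
    have hlt : (2*k).factorial + m < (2*k+1).factorial := by omega
    have he : (2*k).factorial + (m+1) = ((2*k).factorial + m) + 1 := by omega
    rw [he, hu, f4_halve (Nat.le_add_right _ _) hlt, ih hm, pow_succ]
    ring

lemma double_block (u : ℕ → ℂ) (hu : ∀ n : ℕ, u (n + 1) = f4 n (u n)) (k : ℕ) :
    ∀ m : ℕ, (2*k+1).factorial + m ≤ (2*k+2).factorial →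
      u ((2*k+1).factorial + m) = 2 ^ m * (u ((2*k+1).factorial) - 1) + 1 := by
  intro m
  induction m with
  | zero => simp
  | succ m ih =>
    intro h
    have hm : (2*k+1).factorial + m ≤ (2*k+2).factorial := by omega
    have hlt : (2*k+1).factorial + m < (2*k+2).factorial := by omega
    have he : (2*k+1).factorial + (m+1) = ((2*k+1).factorial + m) + 1 := by omega
    rw [he, hu, f4_double (Nat.le_add_right _ _) hlt, ih hm, pow_succ]
    ring

lemma u_odd (u : ℕ → ℂ) (hu : ∀ n : ℕ, u (n + 1) = f4 n (u n)) (k : ℕ) :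
    u ((2*k+1).factorial) = u ((2*k).factorial) / 2 ^ ((2*k).factorial * (2*k)) := by
  have h : (2*k).factorial + (2*k).factorial * (2*k) = (2*k+1).factorial := by
    rw [Nat.factorial_succ]; ring
  rw [← h]
  exact halve_block u hu k _ (le_of_eq h)

lemma u_even (u : ℕ → ℂ) (hu : ∀ n : ℕ, u (n + 1) = f4 n (u n)) (k : ℕ) :
    u ((2*k+2).factorial) =
      2 ^ ((2*k+1).factorial * (2*k+1)) * (u ((2*k+1).factorial) - 1) + 1 := by
  have h : (2*k+1).factorial + (2*k+1).factorial * (2*k+1) = (2*k+2).factorial := by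
    have e1 : (2*k+2).factorial = (2*k+2) * (2*k+1).factorial := Nat.factorial_succ (2*k+1)
    rw [e1]; ring
  rw [← h]
  exact double_block u hu k _ (le_of_eq h)

lemma key (u : ℕ → ℂ) (hu : ∀ n : ℕ, u (n + 1) = f4 n (u n)) (k : ℕ) :
    (2:ℝ) ^ ((2*k).factorial * (2*k)) ≤ 2 * ‖u ((2*k).factorial)‖ ∨
    (2:ℝ) ^ ((2*k+1).factorial * (2*k+1)) ≤ 2 * (‖u ((2*k+2).factorial)‖ + 1) := by
  set M := (2*k).factorial * (2*k) with hM
  set L := (2*k+1).factorial * (2*k+1) with hL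
  set b := u ((2*k+1).factorial) with hb
  rcases le_or_gt ‖b‖ (1/2) with hsmall | hbig
  · right
    have he := u_even u hu k
    rw [← hb, ← hL] at he
    have h1 : ‖(2:ℂ)^L * (b-1)‖ - ‖(-1 : ℂ)‖ ≤ ‖(2:ℂ)^L * (b-1) - (-1)‖ :=
      norm_sub_norm_le _ _
    have h2 : (2:ℂ)^L * (b-1) - (-1) = u ((2*k+2).factorial) := by rw [he]; ring
    have h3 : ‖(2:ℂ)^L * (b-1)‖ = 2^L * ‖b - 1‖ := by
      rw [norm_mul, norm_pow]; norm_num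
    have h4 : (1:ℝ) - ‖b‖ ≤ ‖b - 1‖ := by
      have := norm_sub_norm_le (1:ℂ) b
      rw [norm_sub_rev] at this
      simpa using this
    have h5 : (1:ℝ)/2 ≤ ‖b - 1‖ := by
      have : ‖b‖ ≤ 1/2 := by exact hsmall
      linarith
    have h6 : (2:ℝ)^L * (1/2) - 1 ≤ ‖u ((2*k+2).factorial)‖ := by
      rw [h2] at h1
      simp only [norm_neg, norm_one] at h1
      have hLpos : (0:ℝ) < 2^L := by positivity
      have h7 : (2:ℝ)^L * (1/2) ≤ 2^L * ‖b - 1‖ :=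
        mul_le_mul_of_nonneg_left h5 hLpos.le
      linarith
    linarith
  · left
    have ho := u_odd u hu k
    rw [← hb, ← hM] at ho
    have h2M : ((2:ℂ)^M) ≠ 0 := pow_ne_zero _ two_ne_zero
    have h1 : u ((2*k).factorial) = b * 2^M := (div_eq_iff h2M).mp ho.symm
    have h2 : ‖u ((2*k).factorial)‖ = ‖b‖ * 2^M := by
      rw [h1, norm_mul, norm_pow]; norm_num
    rw [h2]
    have hMpos : (0:ℝ) < 2^M := by positivity
    nlinarith [hbig]

theorem stmt4 (u : ℕ → ℂ) (hu : ∀ n : ℕ, u (n + 1) = f4 n (u n)) :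
    ¬ Subexp u ∧ ∀ α : ℝ, α < 2 → ¬ ∃ B : ℝ, ∀ n : ℕ, ‖u n‖ ≤ B * α ^ n := by
  have main : ∀ α : ℝ, α < 2 → ¬ ∃ B : ℝ, ∀ n : ℕ, ‖u n‖ ≤ B * α ^ n := by
    rintro α hα ⟨B, hB⟩
    have hB0 : 0 ≤ B := le_trans (norm_nonneg _) (by simpa using hB 0)
    -- rule out α < 0
    rcases lt_or_ge α 0 with hαneg | hα0
    · have h1 := hB 1
      have h2 : B * α ^ 1 ≤ 0 := by
        have : α ^ 1 ≤ 0 := by simpa using hαneg.le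
        exact mul_nonpos_of_nonneg_of_nonpos hB0 this
      have h3 : ‖u 1‖ = 0 := le_antisymm (le_trans h1 h2) (norm_nonneg _)
      have hBα : B * α = 0 := by
        have := le_trans h1 h2
        have h0 : 0 ≤ B * α ^ 1 := le_trans (norm_nonneg _) h1
        simpa using le_antisymm h2 h0
      have hB00 : B = 0 := by
        rcases mul_eq_zero.mp hBα with h | h
        · exact h
        · exact absurd h hαneg.ne
      have hzero : ∀ n, u n = 0 := by
        intro n
        have := hB n
        rw [hB00, zero_mul] at this
        have := le_antisymm this (norm_nonneg _)
        exact norm_eq_zero.mp this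
      rcases key u hu 1 with h | h
      · simp only [hzero, norm_zero] at h; norm_num [Nat.factorial] at h
      · simp only [hzero, norm_zero] at h; norm_num [Nat.factorial] at h
    -- now 0 ≤ α < 2
    set β : ℝ := α / 2 with hβdef
    have hβ0 : 0 ≤ β := by positivity
    have hβ1 : β < 1 := by rw [hβdef]; linarith
    set B' : ℝ := B + 1 with hB'def
    have hB'pos : (0:ℝ) < B' := by positivity
    have hB' : ∀ n, ‖u n‖ ≤ B' * α ^ n := by
      intro n
      have hαn : (0:ℝ) ≤ α ^ n := pow_nonneg hα0 n
      have := hB n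
      nlinarith
    obtain ⟨j, hj⟩ := exists_pow_lt_of_lt_one (by norm_num : (0:ℝ) < 1/4) hβ1
    obtain ⟨N, hN⟩ := exists_pow_lt_of_lt_one (by positivity : (0:ℝ) < 1/(8*B')) (by norm_num : (1:ℝ)/2 < 1)
    obtain ⟨k2, hk2⟩ := pow_unbounded_of_one_lt (2*B') (one_lt_two (α := ℝ))
    set k := j + N + k2 + 1 with hk
    have hk1 : 1 ≤ k := by omega
    rcases key u hu k with h | h
    · -- branch 1 : n = (2k)!
      set n1 := (2*k).factorial with hn1
      set M := (2*k).factorial * (2*k) with hMdef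
      have hn1two : 2 ≤ n1 := by
        calc 2 = Nat.factorial 2 := by norm_num
        _ ≤ n1 := Nat.factorial_le (by omega)
      have hMge : n1 + k2 ≤ M := by
        have h1 : k2 ≤ k := by omega
        have h2 : k ≤ n1 * k := Nat.le_mul_of_pos_left k (by omega)
        have h3 : n1 ≤ n1 * k := Nat.le_mul_of_pos_right n1 (by omega)
        have h4 : M = n1 * k + n1 * k := by rw [hMdef, ← hn1]; ring
        omega
      obtain ⟨e, he⟩ : ∃ e, M = n1 + k2 + e := ⟨M - (n1 + k2), by omega⟩
      have hub : ‖u n1‖ ≤ B' * 2 ^ n1 := by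
        calc ‖u n1‖ ≤ B' * α ^ n1 := hB' n1
        _ ≤ B' * 2 ^ n1 := by
            have : α ^ n1 ≤ 2 ^ n1 := pow_le_pow_left₀ hα0 hα.le n1
            nlinarith
      have hlhs : (2:ℝ) ^ M = 2 ^ n1 * 2 ^ k2 * 2 ^ e := by
        rw [he]; ring
      have h2n1 : (0:ℝ) < 2 ^ n1 := by positivity
      have h2e : (1:ℝ) ≤ 2 ^ e := one_le_pow₀ one_le_two
      have habs : (0:ℝ) ≤ ‖u n1‖ := norm_nonneg _
      have hcontr : (2:ℝ) ^ M < 2 ^ M := by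
        calc (2:ℝ) ^ M ≤ 2 * ‖u n1‖ := h
        _ ≤ 2 * (B' * 2 ^ n1) := by linarith
        _ < 2 ^ k2 * 2 ^ n1 := by nlinarith
        _ = 2 ^ n1 * 2 ^ k2 * 1 := by ring
        _ ≤ 2 ^ n1 * 2 ^ k2 * 2 ^ e :=
            mul_le_mul_of_nonneg_left h2e (by positivity)
        _ = 2 ^ M := hlhs.symm
      exact absurd hcontr (lt_irrefl _)
    · -- branch 2 : n = (2k+2)!
      set F := (2*k+1).factorial with hF
      set L := (2*k+1).factorial * (2*k+1) with hLdef
      set n2 := (2*k+2).factorial with hn2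
      have hn2L : n2 = L + F := by
        have e1 : (2*k+2).factorial = (2*k+2) * (2*k+1).factorial := Nat.factorial_succ (2*k+1)
        rw [hn2, hLdef, hF, e1]; ring
      have hFge : N ≤ F := by
        calc N ≤ 2*k+1 := by omega
        _ ≤ F := Nat.self_le_factorial _
      have hL3 : 3 ≤ L := by
        have h1 : 1 ≤ (2*k+1).factorial := Nat.one_le_iff_ne_zero.mpr (Nat.factorial_ne_zero _)
        have h2 : 3 ≤ 2*k+1 := by omega
        calc 3 = 1 * 3 := by norm_num
        _ ≤ (2*k+1).factorial * (2*k+1) := Nat.mul_le_mul h1 h2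
      -- α ^ n2 = 2^n2 * β^n2
      have hαβ : α = 2 * β := by rw [hβdef]; ring
      have hβn2 : β ^ n2 ≤ (1/4:ℝ) ^ F := by
        have h1 : β ^ n2 = (β ^ (2*k+2)) ^ F := by
          have e1 : (2*k+2).factorial = (2*k+2) * (2*k+1).factorial := Nat.factorial_succ (2*k+1)
          rw [hn2, e1, ← hF, pow_mul]
        have h2 : β ^ (2*k+2) ≤ β ^ j :=
          pow_le_pow_of_le_one hβ0 hβ1.le (by omega)
        have h3 : β ^ (2*k+2) ≤ 1/4 := le_trans h2 hj.le
        rw [h1]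
        exact pow_le_pow_left₀ (pow_nonneg hβ0 _) h3 F
      have hαn2 : α ^ n2 ≤ 2 ^ n2 * (1/4:ℝ) ^ F := by
        rw [hαβ, mul_pow]
        have : (0:ℝ) ≤ (2:ℝ) ^ n2 := by positivity
        nlinarith [hβn2, pow_nonneg hβ0 n2]
      have hsplit : (2:ℝ) ^ n2 * (1/4:ℝ) ^ F = 2 ^ L * (1/2:ℝ) ^ F := by
        rw [hn2L, pow_add]
        have h4 : ((1:ℝ)/4) ^ F = ((1/2:ℝ) ^ F) * ((1/2:ℝ) ^ F) := by
          rw [← mul_pow]; norm_num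
        have h2 : ((2:ℝ)) ^ F * ((1/2:ℝ)) ^ F = 1 := by
          rw [← mul_pow]; norm_num
        calc (2:ℝ) ^ L * 2 ^ F * (1/4) ^ F
            = 2 ^ L * (2 ^ F * (1/2:ℝ) ^ F) * (1/2:ℝ) ^ F := by rw [h4]; ring
        _ = 2 ^ L * (1/2:ℝ) ^ F := by rw [h2]; ring
      have hhalf : ((1:ℝ)/2) ^ F < 1/(8*B') := by
        calc ((1:ℝ)/2) ^ F ≤ (1/2:ℝ) ^ N :=
          pow_le_pow_of_le_one (by norm_num) (by norm_num) hFge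
        _ < 1/(8*B') := hN
      have h2L : (0:ℝ) < 2 ^ L := by positivity
      have hub : ‖u n2‖ < 2 ^ L / 8 := by
        calc ‖u n2‖ ≤ B' * α ^ n2 := hB' n2
        _ ≤ B' * (2 ^ L * (1/2:ℝ) ^ F) := by
            rw [← hsplit]
            nlinarith [hαn2]
        _ < B' * (2 ^ L * (1/(8*B'))) := by
            have h9 : 2 ^ L * (1/2:ℝ) ^ F < 2 ^ L * (1/(8*B')) :=
              mul_lt_mul_of_pos_left hhalf h2L
            exact mul_lt_mul_of_pos_left h9 hB'pos
        _ = 2 ^ L / 8 := by field_simp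
      have h8 : (8:ℝ) ≤ 2 ^ L := by
        calc (8:ℝ) = 2 ^ 3 := by norm_num
        _ ≤ 2 ^ L := pow_le_pow_right₀ one_le_two hL3
      linarith
  refine ⟨?_, main⟩
  intro hs
  obtain ⟨B, hB0, hB⟩ := hs (3/2) (by norm_num)
  exact main (3/2) (by norm_num) ⟨B, fun n => by
    simpa using hB n⟩
end

section
/- Let $D$ be a diagonal linear automorphism of $\mathbb{C}^d$ with diagonal entries $\delta(1),\dots,\delta(d)$, and let $\mathscr{T}^k\subset\mathscr{H}^k$ be the subspace of strictly triangular $k$-homogeneous polynomial maps. Then the induced operator $\mathscr{A}_D$ on the quotient $\mathscr{H}^k/\mathscr{T}^k$ satisfies $\|\mathscr{A}_D\|_{L(\mathscr{H}^k/\mathscr{T}^k)} \le \binom{k+d-1}{d-1}\bigl(\max_{1\le h\le d}|\delta(h)|\bigr)^{k-1}\max_{1\le i\le j\le d}\frac{|\delta(j)|}{|\delta(i)|}$. -/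
/-- The sup-norm `‖p‖_{∞, B₁}` of a polynomial map `ℂ^d → ℂ^d` over the closed unit
polydisk (`ℂ^d` carries the max-norm). -/
noncomputable def Hnorm (d : ℕ) (p : Fin d → MvPolynomial (Fin d) ℂ) : ℝ :=
  sSup {r : ℝ | ∃ z : Fin d → ℂ, ‖z‖ ≤ 1 ∧
    r = ‖(fun i => MvPolynomial.eval z (p i) : Fin d → ℂ)‖}

namespace Aux10

open MvPolynomial Finset

variable {d : ℕ}

lemma norm_eval_le_sum (f : MvPolynomial (Fin d) ℂ) (z : Fin d → ℂ) (hz : ‖z‖ ≤ 1) :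
    ‖MvPolynomial.eval z f‖ ≤ ∑ m ∈ f.support, ‖f.coeff m‖ := by
  rw [MvPolynomial.eval_eq']
  refine (norm_sum_le _ _).trans (Finset.sum_le_sum fun m hm => ?_)
  rw [norm_mul]
  have h1 : ‖∏ h, z h ^ m h‖ ≤ 1 := by
    simp_rw [norm_prod, norm_pow]
    refine Finset.prod_le_one (fun h _ => by positivity) (fun h _ => ?_)
    refine pow_le_one₀ (norm_nonneg (z h)) ?_
    exact (norm_le_pi_norm z h).trans hz
  calc ‖f.coeff m‖ * ‖∏ h, z h ^ m h‖ ≤ ‖f.coeff m‖ * 1 :=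
        mul_le_mul_of_nonneg_left h1 (norm_nonneg _)
    _ = ‖f.coeff m‖ := mul_one _

lemma norm_evalVec_le (f : Fin d → MvPolynomial (Fin d) ℂ) (z : Fin d → ℂ) (hz : ‖z‖ ≤ 1) :
    ‖(fun i => MvPolynomial.eval z (f i) : Fin d → ℂ)‖ ≤
      ∑ i, ∑ m ∈ (f i).support, ‖(f i).coeff m‖ := by
  refine pi_norm_le_iff_of_nonneg (by positivity) |>.mpr fun i => ?_
  refine (norm_eval_le_sum (f i) z hz).trans ?_
  exact Finset.single_le_sum (f := fun i => ∑ m ∈ (f i).support, ‖(f i).coeff m‖)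
    (fun j _ => by positivity) (Finset.mem_univ i)

lemma Hnorm_set_nonempty (f : Fin d → MvPolynomial (Fin d) ℂ) :
    {r : ℝ | ∃ z : Fin d → ℂ, ‖z‖ ≤ 1 ∧
      r = ‖(fun i => MvPolynomial.eval z (f i) : Fin d → ℂ)‖}.Nonempty :=
  ⟨_, 0, by simp, rfl⟩

lemma Hnorm_set_bddAbove (f : Fin d → MvPolynomial (Fin d) ℂ) :
    BddAbove {r : ℝ | ∃ z : Fin d → ℂ, ‖z‖ ≤ 1 ∧
      r = ‖(fun i => MvPolynomial.eval z (f i) : Fin d → ℂ)‖} := by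
  refine ⟨∑ i, ∑ m ∈ (f i).support, ‖(f i).coeff m‖, ?_⟩
  rintro r ⟨z, hz, rfl⟩
  exact norm_evalVec_le f z hz

lemma le_Hnorm (f : Fin d → MvPolynomial (Fin d) ℂ) (z : Fin d → ℂ) (hz : ‖z‖ ≤ 1) :
    ‖(fun i => MvPolynomial.eval z (f i) : Fin d → ℂ)‖ ≤ Hnorm d f :=
  le_csSup (Hnorm_set_bddAbove f) ⟨z, hz, rfl⟩

lemma Hnorm_nonneg (f : Fin d → MvPolynomial (Fin d) ℂ) : 0 ≤ Hnorm d f :=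
  (norm_nonneg _).trans (le_Hnorm f 0 (by simp))

lemma Hnorm_le (f : Fin d → MvPolynomial (Fin d) ℂ) (B : ℝ)
    (h : ∀ z : Fin d → ℂ, ‖z‖ ≤ 1 → ‖(fun i => MvPolynomial.eval z (f i) : Fin d → ℂ)‖ ≤ B) :
    Hnorm d f ≤ B :=
  csSup_le (Hnorm_set_nonempty f) (by rintro r ⟨z, hz, rfl⟩; exact h z hz)

lemma orth {N : ℕ} (hN : N ≠ 0) {ζ : ℂ} (hζ : IsPrimitiveRoot ζ N) {a b : ℕ}
    (ha : a < N) (hb : b < N) :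
    ∑ s ∈ Finset.range N, (ζ ^ a * ζ⁻¹ ^ b) ^ s = if a = b then (N : ℂ) else 0 := by
  have hζ0 : ζ ≠ 0 := hζ.ne_zero hN
  by_cases hab : a = b
  · subst hab
    rw [if_pos rfl, inv_pow, mul_inv_cancel₀ (pow_ne_zero _ hζ0)]
    simp
  · rw [if_neg hab]
    have hx1 : ζ ^ a * ζ⁻¹ ^ b ≠ 1 := by
      intro h
      apply hab
      refine hζ.pow_inj ha hb ?_
      field_simp at h
      rw [one_div, inv_pow, mul_inv_eq_one₀ (pow_ne_zero _ hζ0)] at h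
      exact h
    have hxN : (ζ ^ a * ζ⁻¹ ^ b) ^ N = 1 := by
      rw [mul_pow, ← pow_mul, ← pow_mul, mul_comm a N, mul_comm b N, pow_mul, pow_mul,
        hζ.pow_eq_one, inv_pow, hζ.pow_eq_one]
      simp
    rw [geom_sum_eq hx1, hxN]
    simp

lemma extract {N : ℕ} (hN : N ≠ 0) {ζ : ℂ} (hζ : IsPrimitiveRoot ζ N)
    (f : MvPolynomial (Fin d) ℂ) (hf : ∀ m ∈ f.support, ∀ h, m h < N)
    (α : Fin d →₀ ℕ) (hα : ∀ h, α h < N) :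
    (N : ℂ) ^ d * f.coeff α =
      ∑ t : Fin d → Fin N, (∏ h, ζ⁻¹ ^ (α h * (t h : ℕ))) *
        MvPolynomial.eval (fun h => ζ ^ (t h : ℕ)) f := by
  have key : ∀ t : Fin d → Fin N,
      (∏ h, ζ⁻¹ ^ (α h * (t h : ℕ))) * MvPolynomial.eval (fun h => ζ ^ (t h : ℕ)) f
      = ∑ m ∈ f.support, f.coeff m * ∏ h, (ζ ^ (m h) * ζ⁻¹ ^ (α h)) ^ (t h : ℕ) := by
    intro t
    rw [MvPolynomial.eval_eq', Finset.mul_sum]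
    refine Finset.sum_congr rfl fun m _ => ?_
    rw [mul_comm (∏ h, ζ⁻¹ ^ (α h * (t h : ℕ))), mul_assoc, ← Finset.prod_mul_distrib]
    congr 1
    refine Finset.prod_congr rfl fun h _ => ?_
    rw [mul_pow, ← pow_mul, ← pow_mul, ← pow_mul]
    ring_nf
  simp_rw [key]
  rw [Finset.sum_comm]
  have inner : ∀ m ∈ f.support,
      ∑ t : Fin d → Fin N, f.coeff m * ∏ h, (ζ ^ (m h) * ζ⁻¹ ^ (α h)) ^ (t h : ℕ)
      = f.coeff m * (if m = α then (N : ℂ) ^ d else 0) := by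
    intro m hm
    rw [← Finset.mul_sum]
    congr 1
    have hps := Finset.prod_univ_sum (fun _ : Fin d => (Finset.univ : Finset (Fin N)))
      (fun h (s : Fin N) => (ζ ^ (m h) * ζ⁻¹ ^ (α h)) ^ (s : ℕ))
    rw [Fintype.piFinset_univ] at hps
    rw [← hps]
    have horth : ∀ h : Fin d, ∑ s : Fin N, (ζ ^ (m h) * ζ⁻¹ ^ (α h)) ^ (s : ℕ)
        = if m h = α h then (N : ℂ) else 0 := by
      intro h
      rw [Fin.sum_univ_eq_sum_range (fun s => (ζ ^ (m h) * ζ⁻¹ ^ (α h)) ^ s)]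
      exact orth hN hζ (hf m hm h) (hα h)
    simp_rw [horth]
    by_cases hmα : m = α
    · subst hmα
      simp
    · rw [if_neg hmα]
      have : ∃ h : Fin d, m h ≠ α h := by
        by_contra hc
        push_neg at hc
        exact hmα (Finsupp.ext hc)
      obtain ⟨h0, hh0⟩ := this
      exact Finset.prod_eq_zero (Finset.mem_univ h0) (if_neg hh0)
  rw [Finset.sum_congr rfl inner]
  simp_rw [mul_ite, mul_zero]
  rw [Finset.sum_ite_eq' f.support α (fun m => f.coeff m * (N:ℂ)^d)]
  by_cases hαs : α ∈ f.support
  · rw [if_pos hαs, mul_comm]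
  · rw [if_neg hαs, MvPolynomial.notMem_support_iff.mp hαs, mul_zero]


lemma norm_primroot {N : ℕ} (hN : N ≠ 0) {ζ : ℂ} (hζ : IsPrimitiveRoot ζ N) : ‖ζ‖ = 1 := by
  have h1 : ‖ζ‖ ^ N = 1 := by
    rw [← norm_pow, hζ.pow_eq_one, norm_one]
  rcases lt_trichotomy ‖ζ‖ 1 with h | h | h
  · exfalso
    have := pow_lt_one₀ (norm_nonneg ζ) h hN
    rw [h1] at this; exact lt_irrefl 1 this
  · exact h
  · exfalso
    have := one_lt_pow₀ h hN
    rw [h1] at this; exact lt_irrefl 1 this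

lemma card_deg_le (hd : 0 < d) (k : ℕ) (s : Finset (Fin d →₀ ℕ))
    (hs : ∀ m ∈ s, Finsupp.degree m = k) :
    s.card ≤ (k + d - 1).choose (d - 1) := by
  classical
  have hcard : ∀ m ∈ s, Multiset.card (Finsupp.toMultiset m) = k := by
    intro m hm
    rw [Finsupp.card_toMultiset]
    rw [← hs m hm]
    rfl
  let g : {m // m ∈ s} → Sym (Fin d) k := fun m => ⟨Finsupp.toMultiset m.1, hcard m.1 m.2⟩
  have hginj : Function.Injective g := by
    intro a b hab
    have : Finsupp.toMultiset a.1 = Finsupp.toMultiset b.1 := congrArg Subtype.val hab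
    have h2 : a.1 = b.1 := by
      ext x
      rw [← Finsupp.count_toMultiset, ← Finsupp.count_toMultiset, this]
    exact Subtype.ext h2
  have h3 : s.card ≤ Fintype.card (Sym (Fin d) k) := by
    rw [← Fintype.card_coe]
    exact Fintype.card_le_of_injective g hginj
  rw [Sym.card_sym_eq_multichoose, Nat.multichoose_eq, Fintype.card_fin] at h3
  have h4 : (d + k - 1).choose k = (k + d - 1).choose (d - 1) := by
    rw [add_comm d k]
    have h5 : (k + d - 1).choose (k + d - 1 - k) = (k + d - 1).choose k :=
      Nat.choose_symm (by omega)
    rw [show k + d - 1 - k = d - 1 by omega] at h5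
    exact h5.symm
  rwa [h4] at h3

lemma coeff_bind (δ : Fin d → ℂ) (f : MvPolynomial (Fin d) ℂ) (α : Fin d →₀ ℕ) :
    MvPolynomial.coeff α (MvPolynomial.bind₁
        (fun j => δ j • (MvPolynomial.X j : MvPolynomial (Fin d) ℂ)) f) =
      (∏ j, δ j ^ α j) * MvPolynomial.coeff α f := by
  classical
  have hmon : ∀ (m : Fin d →₀ ℕ) (c : ℂ),
      MvPolynomial.bind₁ (fun j => δ j • (MvPolynomial.X j : MvPolynomial (Fin d) ℂ))
        (MvPolynomial.monomial m c) = MvPolynomial.monomial m ((∏ j, δ j ^ m j) * c) := by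
    intro m c
    rw [MvPolynomial.bind₁_monomial]
    have : ∀ i ∈ m.support, (δ i • (MvPolynomial.X i : MvPolynomial (Fin d) ℂ)) ^ m i
        = MvPolynomial.C (δ i ^ m i) * (MvPolynomial.X i) ^ m i := by
      intro i _
      rw [MvPolynomial.smul_eq_C_mul, mul_pow, ← MvPolynomial.C_pow]
    rw [Finset.prod_congr rfl this, Finset.prod_mul_distrib, ← map_prod (MvPolynomial.C : ℂ →+* MvPolynomial (Fin d) ℂ)]
    have hprod : ∏ i ∈ m.support, δ i ^ m i = ∏ j, δ j ^ m j := by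
      refine Finset.prod_subset (Finset.subset_univ _) fun j _ hj => ?_
      rw [Finsupp.notMem_support_iff.mp hj, pow_zero]
    rw [hprod, MvPolynomial.monomial_eq, Finsupp.prod, ← mul_assoc, ← MvPolynomial.C_mul, mul_comm c]
  conv_lhs => rw [MvPolynomial.as_sum f]
  rw [map_sum]
  simp_rw [hmon]
  rw [MvPolynomial.coeff_sum]
  simp_rw [MvPolynomial.coeff_monomial]
  rw [Finset.sum_ite_eq' f.support α (fun m => (∏ j, δ j ^ m j) * MvPolynomial.coeff m f)]
  by_cases hαs : α ∈ f.support
  · rw [if_pos hαs]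
  · rw [if_neg hαs, MvPolynomial.notMem_support_iff.mp hαs, mul_zero]


lemma coeff_le_Hnorm {K : ℕ} (f : Fin d → MvPolynomial (Fin d) ℂ)
    (hf : ∀ i, ∀ m ∈ (f i).support, ∀ h, m h ≤ K) (i : Fin d) (α : Fin d →₀ ℕ)
    (hα : ∀ h, α h ≤ K) :
    ‖(f i).coeff α‖ ≤ Hnorm d f := by
  set N := K + 1 with hNdef
  have hN : N ≠ 0 := Nat.succ_ne_zero K
  obtain ⟨ζ, hζ⟩ : ∃ ζ : ℂ, IsPrimitiveRoot ζ N :=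
    ⟨Complex.exp (2 * Real.pi * Complex.I / N), Complex.isPrimitiveRoot_exp N hN⟩
  have hζn : ‖ζ‖ = 1 := norm_primroot hN hζ
  have hext := extract hN hζ (f i) (fun m hm h => Nat.lt_succ_of_le (hf i m hm h))
    α (fun h => Nat.lt_succ_of_le (hα h))
  have hnorm : (N : ℝ) ^ d * ‖(f i).coeff α‖ = ‖(N : ℂ) ^ d * (f i).coeff α‖ := by
    rw [norm_mul, norm_pow, Complex.norm_natCast]
  have hbound : ‖(N : ℂ) ^ d * (f i).coeff α‖ ≤ (N : ℝ) ^ d * Hnorm d f := by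
    rw [hext]
    refine (norm_sum_le _ _).trans ?_
    have hterm : ∀ t : Fin d → Fin N,
        ‖(∏ h, ζ⁻¹ ^ (α h * (t h : ℕ))) * MvPolynomial.eval (fun h => ζ ^ (t h : ℕ)) (f i)‖
          ≤ Hnorm d f := by
      intro t
      rw [norm_mul]
      have h1 : ‖∏ h, ζ⁻¹ ^ (α h * (t h : ℕ))‖ = 1 := by
        rw [norm_prod]
        refine Finset.prod_eq_one fun h _ => ?_
        rw [norm_pow, norm_inv, hζn, inv_one, one_pow]
      rw [h1, one_mul]
      have hz : ‖(fun h => ζ ^ (t h : ℕ) : Fin d → ℂ)‖ ≤ 1 := by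
        refine pi_norm_le_iff_of_nonneg zero_le_one |>.mpr fun h => ?_
        rw [norm_pow, hζn, one_pow]
      exact (norm_le_pi_norm (fun j => MvPolynomial.eval (fun h => ζ ^ (t h : ℕ)) (f j)) i).trans
        (le_Hnorm f _ hz)
    refine (Finset.sum_le_sum fun t _ => hterm t).trans ?_
    rw [Finset.sum_const, Finset.card_univ, Fintype.card_fun, Fintype.card_fin, Fintype.card_fin,
      nsmul_eq_mul]
    rw [Nat.cast_pow]
  have hNpos : (0 : ℝ) < (N : ℝ) ^ d := by positivity
  have := hnorm ▸ hbound
  exact le_of_mul_le_mul_left this hNpos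

lemma Hnorm_zero : Hnorm d (fun _ => (0 : MvPolynomial (Fin d) ℂ)) = 0 := by
  refine le_antisymm (Hnorm_le _ 0 fun z hz => ?_) (Hnorm_nonneg _)
  have : (fun i => MvPolynomial.eval z ((fun _ => (0 : MvPolynomial (Fin d) ℂ)) i))
      = (0 : Fin d → ℂ) := by funext i; simp
  rw [this, norm_zero]

lemma coeff_sum_monomial (s : Finset (Fin d →₀ ℕ)) (c : (Fin d →₀ ℕ) → ℂ) (α : Fin d →₀ ℕ) :
    MvPolynomial.coeff α (∑ m ∈ s, MvPolynomial.monomial m (c m)) =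
      if α ∈ s then c α else 0 := by
  rw [MvPolynomial.coeff_sum]
  simp_rw [MvPolynomial.coeff_monomial]
  exact Finset.sum_ite_eq' s α c

lemma degree_eq_sum_univ (m : Fin d →₀ ℕ) : Finsupp.degree m = ∑ h, m h := by
  rw [Finsupp.degree]
  exact Finset.sum_subset (Finset.subset_univ _)
    (fun h _ hh => Finsupp.notMem_support_iff.mp hh)

end Aux10

/-- A polynomial map is strictly triangular if each monomial `z^α e_i` that occurs
satisfies `α_j = 0` for all `j ≥ i`. -/
def StrictTriang {d : ℕ} (t : Fin d → MvPolynomial (Fin d) ℂ) : Prop :=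
  ∀ i : Fin d, ∀ m ∈ (t i).support, ∀ j : Fin d, i ≤ j → m j = 0

/-- The quotient norm on `𝓗^k/𝓣^k`: the infimum of `‖p - t‖` over strictly triangular
`k`-homogeneous polynomial maps `t`. -/
noncomputable def QuotNorm (d k : ℕ) (p : Fin d → MvPolynomial (Fin d) ℂ) : ℝ :=
  sInf {r : ℝ | ∃ t : Fin d → MvPolynomial (Fin d) ℂ,
    (∀ i, (t i).IsHomogeneous k) ∧ StrictTriang t ∧ r = Hnorm d (fun i => p i - t i)}

theorem stmt10 (d k : ℕ) (hd : 0 < d) (δ : Fin d → ℂ) (hδ : ∀ j, δ j ≠ 0)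
    (p : Fin d → MvPolynomial (Fin d) ℂ) (hp : ∀ i, (p i).IsHomogeneous k) :
    QuotNorm d k (fun i => (δ i)⁻¹ •
        MvPolynomial.bind₁ (fun j => δ j • (MvPolynomial.X j : MvPolynomial (Fin d) ℂ)) (p i))
      ≤ ((k + d - 1).choose (d - 1) : ℝ) * (⨆ h : Fin d, ‖δ h‖) ^ ((k : ℤ) - 1) *
        sSup {r : ℝ | ∃ i j : Fin d, i ≤ j ∧ r = ‖δ j‖ / ‖δ i‖} * QuotNorm d k p := by
  classical
  open MvPolynomial Finset Aux10 in
  set ADp : Fin d → MvPolynomial (Fin d) ℂ := fun i => (δ i)⁻¹ •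
      MvPolynomial.bind₁ (fun j => δ j • (MvPolynomial.X j : MvPolynomial (Fin d) ℂ)) (p i)
    with hADpdef
  set M : ℝ := ⨆ h : Fin d, ‖δ h‖ with hMdef
  set R : ℝ := sSup {r : ℝ | ∃ i j : Fin d, i ≤ j ∧ r = ‖δ j‖ / ‖δ i‖} with hRdef
  have coeff_ADp : ∀ i m, MvPolynomial.coeff m (ADp i) =
      (δ i)⁻¹ * ((∏ j, δ j ^ m j) * MvPolynomial.coeff m (p i)) := by
    intro i m
    rw [hADpdef]
    simp only [MvPolynomial.coeff_smul, smul_eq_mul]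
    rw [Aux10.coeff_bind]
  have coeffp_ne : ∀ i m, MvPolynomial.coeff m (ADp i) ≠ 0 →
      MvPolynomial.coeff m (p i) ≠ 0 := by
    intro i m hne hc
    exact hne (by rw [coeff_ADp, hc, mul_zero, mul_zero])
  have hADph : ∀ i, (ADp i).IsHomogeneous k := fun i m hm => hp i (coeffp_ne i m hm)
  have hsupdeg : ∀ i m, m ∈ (p i).support → Finsupp.degree m = k := by
    intro i m hm
    by_contra h
    exact MvPolynomial.mem_support_iff.mp hm ((hp i).coeff_eq_zero h)
  have hbddS : ∀ g : Fin d → MvPolynomial (Fin d) ℂ, BddBelow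
      {r : ℝ | ∃ t : Fin d → MvPolynomial (Fin d) ℂ,
        (∀ i, (t i).IsHomogeneous k) ∧ StrictTriang t ∧ r = Hnorm d (fun i => g i - t i)} := by
    intro g
    exact ⟨0, by rintro r ⟨t, _, _, rfl⟩; exact Aux10.Hnorm_nonneg _⟩
  have hM0 : 0 ≤ M := by
    rw [hMdef]
    exact Real.iSup_nonneg fun h => norm_nonneg _
  have hMle : ∀ h, ‖δ h‖ ≤ M := by
    intro h
    rw [hMdef]
    exact le_ciSup (f := fun h : Fin d => ‖δ h‖) (Finite.bddAbove_range _) h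
  have hRbdd : BddAbove {r : ℝ | ∃ i j : Fin d, i ≤ j ∧ r = ‖δ j‖ / ‖δ i‖} := by
    refine (Set.finite_range (fun q : Fin d × Fin d => ‖δ q.2‖ / ‖δ q.1‖)).bddAbove.mono ?_
    rintro r ⟨i, j, _, rfl⟩
    exact ⟨(i, j), rfl⟩
  have hRle : ∀ i j : Fin d, i ≤ j → ‖δ j‖ / ‖δ i‖ ≤ R :=
    fun i j hij => le_csSup hRbdd ⟨i, j, hij, rfl⟩
  have hR1 : 1 ≤ R := by
    have i0 : Fin d := ⟨0, hd⟩
    have h1 : ‖δ i0‖ / ‖δ i0‖ = 1 := div_self (norm_ne_zero_iff.mpr (hδ i0))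
    calc (1:ℝ) = ‖δ i0‖ / ‖δ i0‖ := h1.symm
      _ ≤ R := hRle i0 i0 le_rfl
  have hQp0 : 0 ≤ QuotNorm d k p :=
    Real.sInf_nonneg (by rintro r ⟨t, _, _, rfl⟩; exact Aux10.Hnorm_nonneg _)
  rcases Nat.eq_zero_or_pos k with hk0 | hk
  · -- k = 0 case
    subst hk0
    have hT : StrictTriang ADp := by
      intro i m hm j _
      have h1 : Finsupp.degree m = 0 := hsupdeg i m
        (MvPolynomial.mem_support_iff.mpr (coeffp_ne i m (MvPolynomial.mem_support_iff.mp hm)))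
      have := (Finsupp.le_degree j m).trans h1.le
      omega
    have hmem : Hnorm d (fun i => ADp i - ADp i) ∈
        {r : ℝ | ∃ t : Fin d → MvPolynomial (Fin d) ℂ,
          (∀ i, (t i).IsHomogeneous 0) ∧ StrictTriang t ∧ r = Hnorm d (fun i => ADp i - t i)} :=
      ⟨ADp, hADph, hT, rfl⟩
    have hle0 : QuotNorm d 0 ADp ≤ 0 := by
      have h1 := csInf_le (hbddS ADp) hmem
      have h2 : (fun i => ADp i - ADp i) = (fun _ => (0 : MvPolynomial (Fin d) ℂ)) := by
        funext i; exact sub_self _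
      rwa [h2, Aux10.Hnorm_zero] at h1
    refine hle0.trans (mul_nonneg (mul_nonneg (mul_nonneg (Nat.cast_nonneg _)
      (zpow_nonneg hM0 _)) (zero_le_one.trans hR1)) hQp0)
  · -- k ≥ 1 case
    have hzp : M ^ ((k:ℤ) - 1) = M ^ (k - 1 : ℕ) := by
      rw [show (k:ℤ) - 1 = ((k - 1 : ℕ) : ℤ) by omega, zpow_natCast]
    set C : ℝ := ((k + d - 1).choose (d - 1) : ℝ) * M ^ (k - 1 : ℕ) * R with hCdef
    have hMpos : 0 < M := lt_of_lt_of_le (norm_pos_iff.mpr (hδ ⟨0, hd⟩)) (hMle ⟨0, hd⟩)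
    have hCpos : 0 < C := by
      have hb : (0:ℝ) < ((k + d - 1).choose (d - 1) : ℝ) := by
        exact_mod_cast Nat.choose_pos (show d - 1 ≤ k + d - 1 by omega)
      have hm : (0:ℝ) < M ^ (k - 1 : ℕ) := pow_pos hMpos _
      rw [hCdef]
      exact mul_pos (mul_pos hb hm) (lt_of_lt_of_le one_pos hR1)
    have key : ∀ r ∈ {r : ℝ | ∃ t : Fin d → MvPolynomial (Fin d) ℂ,
        (∀ i, (t i).IsHomogeneous k) ∧ StrictTriang t ∧ r = Hnorm d (fun i => p i - t i)},
        QuotNorm d k ADp ≤ C * r := by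
      rintro r ⟨t, tth, htT, rfl⟩
      set q : Fin d → MvPolynomial (Fin d) ℂ := fun i => p i - t i with hqdef
      have hqh : ∀ i, (q i).IsHomogeneous k := fun i => (hp i).sub (tth i)
      have hqsupdeg : ∀ i m, m ∈ (q i).support → Finsupp.degree m = k := by
        intro i m hm
        by_contra h
        exact MvPolynomial.mem_support_iff.mp hm ((hqh i).coeff_eq_zero h)
      have hqexp : ∀ i, ∀ m ∈ (q i).support, ∀ h, m h ≤ k :=
        fun i m hm h => (Finsupp.le_degree h m).trans (hqsupdeg i m hm).le
      set Hq : ℝ := Hnorm d q with hHqdef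
      have hHq0 : 0 ≤ Hq := Aux10.Hnorm_nonneg _
      set t' : Fin d → MvPolynomial (Fin d) ℂ := fun i =>
        ∑ m ∈ (ADp i).support.filter (fun m => ∀ j, i ≤ j → m j = 0),
          MvPolynomial.monomial m (MvPolynomial.coeff m (ADp i)) with ht'def
      have coeff_t' : ∀ i α, MvPolynomial.coeff α (t' i) =
          if α ∈ (ADp i).support.filter (fun m => ∀ j, i ≤ j → m j = 0)
          then MvPolynomial.coeff α (ADp i) else 0 := by
        intro i α
        rw [ht'def]
        exact Aux10.coeff_sum_monomial _ _ α
      have t'h : ∀ i, (t' i).IsHomogeneous k := by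
        intro i m hm
        rw [coeff_t'] at hm
        by_cases hmem : m ∈ (ADp i).support.filter (fun m => ∀ j, i ≤ j → m j = 0)
        · rw [if_pos hmem] at hm
          exact hADph i hm
        · rw [if_neg hmem] at hm
          exact absurd rfl hm
      have t'T : StrictTriang t' := by
        intro i m hm j hij
        have hc := MvPolynomial.mem_support_iff.mp hm
        rw [coeff_t'] at hc
        by_cases hmem : m ∈ (ADp i).support.filter (fun m => ∀ j, i ≤ j → m j = 0)
        · exact (Finset.mem_filter.mp hmem).2 j hij
        · rw [if_neg hmem] at hc
          exact absurd rfl hc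
      have hmem : Hnorm d (fun i => ADp i - t' i) ∈
          {r : ℝ | ∃ t : Fin d → MvPolynomial (Fin d) ℂ,
            (∀ i, (t i).IsHomogeneous k) ∧ StrictTriang t ∧
              r = Hnorm d (fun i => ADp i - t i)} :=
        ⟨t', t'h, t'T, rfl⟩
      have hstep1 : QuotNorm d k ADp ≤ Hnorm d (fun i => ADp i - t' i) :=
        csInf_le (hbddS ADp) hmem
      have coeff_g : ∀ i α, MvPolynomial.coeff α (ADp i - t' i) =
          if α ∈ (ADp i).support.filter (fun m => ∀ j, i ≤ j → m j = 0)
          then 0 else MvPolynomial.coeff α (ADp i) := by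
        intro i α
        rw [MvPolynomial.coeff_sub, coeff_t']
        split_ifs
        · ring
        · ring
      have hestimate : Hnorm d (fun i => ADp i - t' i) ≤ C * Hq := by
        refine Aux10.Hnorm_le _ _ fun z hz => ?_
        refine pi_norm_le_iff_of_nonneg (by positivity) |>.mpr fun i => ?_
        refine (Aux10.norm_eval_le_sum _ z hz).trans ?_
        set B : Finset (Fin d →₀ ℕ) :=
          (p i).support.filter (fun m => ¬ ∀ j, i ≤ j → m j = 0) with hBdef
        have hsub : (ADp i - t' i).support ⊆ B := by
          intro m hm
          have hc := MvPolynomial.mem_support_iff.mp hm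
          rw [coeff_g] at hc
          by_cases hmemf : m ∈ (ADp i).support.filter (fun m => ∀ j, i ≤ j → m j = 0)
          · rw [if_pos hmemf] at hc
            exact absurd rfl hc
          · rw [if_neg hmemf] at hc
            have hps : m ∈ (p i).support :=
              MvPolynomial.mem_support_iff.mpr (coeffp_ne i m hc)
            have hADps : m ∈ (ADp i).support := MvPolynomial.mem_support_iff.mpr hc
            have hnt : ¬ ∀ j, i ≤ j → m j = 0 := by
              intro hP
              exact hmemf (Finset.mem_filter.mpr ⟨hADps, hP⟩)
            exact Finset.mem_filter.mpr ⟨hps, hnt⟩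
        have hperterm : ∀ m ∈ B, ‖MvPolynomial.coeff m (ADp i - t' i)‖ ≤ M ^ (k-1:ℕ) * R * Hq := by
          intro m hmB
          obtain ⟨hps, hnt⟩ := Finset.mem_filter.mp hmB
          push_neg at hnt
          obtain ⟨j, hij, hmj⟩ := hnt
          have hmemf : m ∉ (ADp i).support.filter (fun m => ∀ j, i ≤ j → m j = 0) := by
            intro hmem2
            exact hmj ((Finset.mem_filter.mp hmem2).2 j hij)
          have hcoef : MvPolynomial.coeff m (ADp i - t' i) =
              (δ i)⁻¹ * ((∏ h, δ h ^ m h) * MvPolynomial.coeff m (q i)) := by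
            rw [coeff_g, if_neg hmemf, coeff_ADp]
            have hct : MvPolynomial.coeff m (t i) = 0 := by
              by_contra hc
              exact hmj (htT i m (MvPolynomial.mem_support_iff.mpr hc) j hij)
            rw [hqdef]
            simp only [MvPolynomial.coeff_sub, hct, sub_zero]
          rw [hcoef]
          have hsum : ∑ h, m h = k := by
            have h0 := Aux10.degree_eq_sum_univ m
            rw [hsupdeg i m hps] at h0
            exact h0.symm
          have hprodbound : ∏ h, ‖δ h‖ ^ m h ≤ ‖δ j‖ * M ^ (k-1:ℕ) := by
            set e : Fin d → ℕ := fun h => if h = j then m j - 1 else m h with hedef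
            have hsplitm : ∏ h, ‖δ h‖ ^ m h = ‖δ j‖ * ∏ h, ‖δ h‖ ^ e h := by
              rw [Finset.prod_eq_mul_prod_sdiff_singleton_of_mem (Finset.mem_univ j)
                  (fun h => ‖δ h‖ ^ m h),
                Finset.prod_eq_mul_prod_sdiff_singleton_of_mem (Finset.mem_univ j)
                  (fun h => ‖δ h‖ ^ e h)]
              have h1 : e j = m j - 1 := if_pos rfl
              have h2 : ∀ h ∈ Finset.univ \ {j}, ‖δ h‖ ^ e h = ‖δ h‖ ^ m h := by
                intro h hh
                have : h ≠ j := by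
                  intro he; subst he
                  exact (Finset.mem_sdiff.mp hh).2 (Finset.mem_singleton_self h)
                rw [hedef]; simp only [if_neg this]
              rw [Finset.prod_congr rfl h2, h1]
              have h3 : ‖δ j‖ ^ m j = ‖δ j‖ * ‖δ j‖ ^ (m j - 1) := by
                conv_lhs => rw [show m j = (m j - 1) + 1 by omega]
                rw [pow_succ]
                ring
              rw [h3]; ring
            have hesum : ∑ h, e h = k - 1 := by
              have h4 : m j + ∑ h ∈ Finset.univ.erase j, m h = ∑ h, m h :=
                Finset.add_sum_erase Finset.univ (fun h => m h) (Finset.mem_univ j)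
              have h5 : e j + ∑ h ∈ Finset.univ.erase j, e h = ∑ h, e h :=
                Finset.add_sum_erase Finset.univ e (Finset.mem_univ j)
              have h6 : ∀ h ∈ Finset.univ.erase j, e h = m h := by
                intro h hh
                have hne : h ≠ j := (Finset.mem_erase.mp hh).1
                rw [hedef]; simp only [if_neg hne]
              have h9 : ∑ h ∈ Finset.univ.erase j, e h = ∑ h ∈ Finset.univ.erase j, m h :=
                Finset.sum_congr rfl h6
              have h7 : e j = m j - 1 := if_pos rfl
              have h10 := h4.trans hsum
              rw [← h5, h9, h7]
              omega
            have hle : ∏ h, ‖δ h‖ ^ e h ≤ M ^ (k-1:ℕ) := by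
              calc ∏ h, ‖δ h‖ ^ e h ≤ ∏ h, M ^ e h := by
                    refine Finset.prod_le_prod (fun h _ => by positivity) (fun h _ => ?_)
                    exact pow_le_pow_left₀ (norm_nonneg _) (hMle h) _
                _ = M ^ (∑ h, e h) := Finset.prod_pow_eq_pow_sum _ _ _
                _ = M ^ (k-1:ℕ) := by rw [hesum]
            rw [hsplitm]
            exact mul_le_mul_of_nonneg_left hle (norm_nonneg _)
          have hcq : ‖MvPolynomial.coeff m (q i)‖ ≤ Hq := by
            refine Aux10.coeff_le_Hnorm q hqexp i m fun h => ?_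
            exact (Finsupp.le_degree h m).trans (hsupdeg i m hps).le
          rw [norm_mul, norm_mul, norm_inv, norm_prod]
          simp_rw [norm_pow]
          calc ‖δ i‖⁻¹ * ((∏ h, ‖δ h‖ ^ m h) * ‖MvPolynomial.coeff m (q i)‖)
              ≤ ‖δ i‖⁻¹ * ((‖δ j‖ * M ^ (k-1:ℕ)) * Hq) := by
                have hnn : (0:ℝ) ≤ ‖δ i‖⁻¹ := by positivity
                refine mul_le_mul_of_nonneg_left ?_ hnn
                refine mul_le_mul hprodbound hcq (norm_nonneg _) (by positivity)
            _ = (‖δ j‖ / ‖δ i‖) * (M ^ (k-1:ℕ) * Hq) := by ring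
            _ ≤ R * (M ^ (k-1:ℕ) * Hq) := by
                refine mul_le_mul_of_nonneg_right (hRle i j hij) (by positivity)
            _ = M ^ (k-1:ℕ) * R * Hq := by ring
        calc ∑ m ∈ (ADp i - t' i).support, ‖MvPolynomial.coeff m (ADp i - t' i)‖
            ≤ ∑ m ∈ B, ‖MvPolynomial.coeff m (ADp i - t' i)‖ :=
              Finset.sum_le_sum_of_subset_of_nonneg hsub (fun m _ _ => norm_nonneg _)
          _ ≤ ∑ _m ∈ B, M ^ (k-1:ℕ) * R * Hq := Finset.sum_le_sum hperterm
          _ = (B.card : ℝ) * (M ^ (k-1:ℕ) * R * Hq) := by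
              rw [Finset.sum_const, nsmul_eq_mul]
          _ ≤ ((k + d - 1).choose (d - 1) : ℝ) * (M ^ (k-1:ℕ) * R * Hq) := by
              refine mul_le_mul_of_nonneg_right ?_ (by positivity)
              have hcard : B.card ≤ (k + d - 1).choose (d - 1) := by
                refine le_trans (Finset.card_le_card (Finset.filter_subset _ _)) ?_
                exact Aux10.card_deg_le hd k (p i).support (hsupdeg i)
              exact_mod_cast hcard
          _ = C * Hq := by rw [hCdef]; ring
      exact hstep1.trans hestimate
    have hSpne : {r : ℝ | ∃ t : Fin d → MvPolynomial (Fin d) ℂ,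
        (∀ i, (t i).IsHomogeneous k) ∧ StrictTriang t ∧
          r = Hnorm d (fun i => p i - t i)}.Nonempty := by
      refine ⟨Hnorm d (fun i => p i - (fun _ => (0:MvPolynomial (Fin d) ℂ)) i),
        fun _ => (0:MvPolynomial (Fin d) ℂ), fun i => MvPolynomial.isHomogeneous_zero _ _ _,
        ?_, rfl⟩
      intro i m hm
      simp at hm
    have hfinal : QuotNorm d k ADp ≤ C * QuotNorm d k p := by
      have h1 : QuotNorm d k ADp / C ≤ QuotNorm d k p := by
        refine le_csInf hSpne fun r hr => ?_
        rw [div_le_iff₀ hCpos]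
        calc QuotNorm d k ADp ≤ C * r := key r hr
          _ = r * C := mul_comm _ _
      calc QuotNorm d k ADp = (QuotNorm d k ADp / C) * C := by field_simp
        _ ≤ QuotNorm d k p * C := mul_le_mul_of_nonneg_right h1 hCpos.le
        _ = C * QuotNorm d k p := mul_comm _ _
    calc QuotNorm d k ADp ≤ C * QuotNorm d k p := hfinal
      _ = ((k + d - 1).choose (d - 1) : ℝ) * M ^ ((k:ℤ)-1) * R * QuotNorm d k p := by
          rw [hzp, hCdef]
end
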